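/- Let κ ∈ 𝐊 and σ̌ > 0. Then f_{κ,σ̌} is equivalent to the identity on [0,∞): for every r ≥ 0 one has C_{κ,σ̌}·r ≤ f_{κ,σ̌}(r) ≤ r and C_{κ,σ̌} ≤ f'_{κ,σ̌}(r) ≤ 1, where C_{κ,σ̌} = φ(R₀)/2 and f'_{κ,σ̌}(r) = φ(r)g(r). -/

import Mathlib

open Real MeasureTheory Set Filter

noncomputable section

/-- The class `𝐊` of monotonicity profiles: continuous on `(0,∞)`,
`∫₀¹ r (κ r)⁻ dr < ∞` and `liminf_{r→∞} κ(r) > 0`. -/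
def memK (κ : ℝ → ℝ) : Prop :=
  ContinuousOn κ (Set.Ioi 0) ∧
  MeasureTheory.IntegrableOn (fun r => r * max (-κ r) 0) (Set.Ioc 0 1) ∧
  ∃ ε > 0, ∀ᶠ r in Filter.atTop, ε ≤ κ r

/-- The set defining `R₀ = inf {R ≥ 0 : κ(r) ≥ 0 for all r ≥ R}`. -/
def R0set (κ : ℝ → ℝ) : Set ℝ := {R | 0 ≤ R ∧ ∀ r, 0 < r → R ≤ r → 0 ≤ κ r}

def R0 (κ : ℝ → ℝ) : ℝ := sInf (R0set κ)

/-- The set defining `R₁ = inf {R ≥ R₀ : R(R−R₀)·inf_{r ≥ R} κ(r) ≥ 4σ̌²}`. -/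
def R1set (κ : ℝ → ℝ) (σ : ℝ) : Set ℝ :=
  {R | R0 κ ≤ R ∧ ∀ r, 0 < r → R ≤ r → 4 * σ ^ 2 ≤ R * (R - R0 κ) * κ r}

def R1 (κ : ℝ → ℝ) (σ : ℝ) : ℝ := sInf (R1set κ σ)

/-- `φ(r) = exp(−(1/(2σ̌²)) ∫₀ʳ s (κ s)⁻ ds)`. -/
def phiF (κ : ℝ → ℝ) (σ : ℝ) (r : ℝ) : ℝ :=
  Real.exp (-(1 / (2 * σ ^ 2)) * ∫ s in (0:ℝ)..r, s * max (-κ s) 0)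

/-- `Φ(r) = ∫₀ʳ φ(s) ds`. -/
def PhiF (κ : ℝ → ℝ) (σ : ℝ) (r : ℝ) : ℝ := ∫ s in (0:ℝ)..r, phiF κ σ s

/-- `𝒵 = ∫₀^{R₁} Φ(s)/φ(s) ds`. -/
def Zconst (κ : ℝ → ℝ) (σ : ℝ) : ℝ :=
  ∫ s in (0:ℝ)..(R1 κ σ), PhiF κ σ s / phiF κ σ s

/-- `g(r) = 1 − (∫₀^{min(r,R₁)} Φ(s)/φ(s) ds)/(2𝒵)`. -/
def gF (κ : ℝ → ℝ) (σ : ℝ) (r : ℝ) : ℝ :=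
  1 - (∫ s in (0:ℝ)..(min r (R1 κ σ)), PhiF κ σ s / phiF κ σ s) / (2 * Zconst κ σ)

/-- `f_{κ,σ̌}(r) = ∫₀ʳ φ(s) g(s) ds`. -/
def fF (κ : ℝ → ℝ) (σ : ℝ) (r : ℝ) : ℝ := ∫ s in (0:ℝ)..r, phiF κ σ s * gF κ σ s

/-- `λ_{κ,σ̌} = σ̌²/𝒵`. -/
def lamConst (κ : ℝ → ℝ) (σ : ℝ) : ℝ := σ ^ 2 / Zconst κ σ

/-- `C_{κ,σ̌} = φ(R₀)/2`. -/
def CConst (κ : ℝ → ℝ) (σ : ℝ) : ℝ := phiF κ σ (R0 κ) / 2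

namespace Stmt2Aux

variable {κ : ℝ → ℝ} {σ : ℝ}

lemma hfun_intervalIntegrable (hκ : memK κ) {a b : ℝ} (ha : 0 ≤ a) (hab : a ≤ b) :
    IntervalIntegrable (fun s => s * max (-κ s) 0) volume a b := by
  rw [intervalIntegrable_iff_integrableOn_Ioc_of_le hab]
  have key : IntegrableOn (fun s => s * max (-κ s) 0) (Ioc 0 b) := by
    rcases le_or_gt b 1 with hb | hb
    · exact hκ.2.1.mono_set (Ioc_subset_Ioc_right hb)
    · have hc : ContinuousOn (fun s => s * max (-κ s) 0) (Icc 1 b) := by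
        have hk : ContinuousOn κ (Icc 1 b) :=
          hκ.1.mono fun x hx => lt_of_lt_of_le one_pos hx.1
        have h2 : ContinuousOn (fun s => max (-κ s) 0) (Icc 1 b) :=
          ContinuousOn.sup hk.neg continuousOn_const
        exact ContinuousOn.mul continuous_id.continuousOn h2
      have h1 : IntegrableOn (fun s => s * max (-κ s) 0) (Ioc 1 b) :=
        (hc.integrableOn_Icc).mono_set Ioc_subset_Icc_self
      have he : Ioc (0:ℝ) b = Ioc 0 1 ∪ Ioc 1 b := (Ioc_union_Ioc_eq_Ioc zero_le_one hb.le).symm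
      rw [he]; exact hκ.2.1.union h1
  exact key.mono_set (Ioc_subset_Ioc_left ha)

def Hf (κ : ℝ → ℝ) (r : ℝ) : ℝ := ∫ s in (0:ℝ)..r, s * max (-κ s) 0

lemma Hf_nonneg {r : ℝ} (hr : 0 ≤ r) : 0 ≤ Hf κ r :=
  intervalIntegral.integral_nonneg hr fun u hu => mul_nonneg hu.1 (le_max_right _ _)

lemma Hf_mono (hκ : memK κ) {a b : ℝ} (ha : 0 ≤ a) (hab : a ≤ b) : Hf κ a ≤ Hf κ b := by
  have h1 := hfun_intervalIntegrable hκ le_rfl ha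
  have h2 := hfun_intervalIntegrable hκ ha hab
  have hadd := intervalIntegral.integral_add_adjacent_intervals h1 h2
  have hpos : 0 ≤ ∫ s in a..b, s * max (-κ s) 0 :=
    intervalIntegral.integral_nonneg hab fun u hu => mul_nonneg (ha.trans hu.1) (le_max_right _ _)
  unfold Hf; linarith

lemma phiF_eq (r : ℝ) : phiF κ σ r = Real.exp (-(1 / (2 * σ ^ 2)) * Hf κ r) := rfl

lemma phiF_pos (r : ℝ) : 0 < phiF κ σ r := Real.exp_pos _

lemma phiF_le_one (hσ : 0 < σ) {r : ℝ} (hr : 0 ≤ r) : phiF κ σ r ≤ 1 := by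
  rw [phiF_eq, Real.exp_le_one_iff]
  have h1 : (0:ℝ) ≤ 1 / (2 * σ ^ 2) := by positivity
  exact mul_nonpos_of_nonpos_of_nonneg (by linarith) (Hf_nonneg hr)

lemma phiF_anti (hκ : memK κ) (hσ : 0 < σ) : AntitoneOn (phiF κ σ) (Ici 0) := by
  intro a ha b hb hab
  rw [phiF_eq, phiF_eq, Real.exp_le_exp]
  have := Hf_mono hκ ha hab
  have h1 : (0:ℝ) ≤ 1 / (2 * σ ^ 2) := by positivity
  nlinarith

lemma R0set_nonempty (hκ : memK κ) : (R0set κ).Nonempty := by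
  obtain ⟨ε, hε, hev⟩ := hκ.2.2
  rw [eventually_atTop] at hev
  obtain ⟨M, hM⟩ := hev
  exact ⟨max M 0, le_max_right _ _,
    fun r _ hMr => le_trans hε.le (hM r ((le_max_left M 0).trans hMr))⟩

lemma R0_nonneg : 0 ≤ R0 κ := Real.sInf_nonneg fun x hx => hx.1

lemma kappa_nonneg (hκ : memK κ) {s : ℝ} (hs : R0 κ < s) : 0 ≤ κ s := by
  have hbdd : BddBelow (R0set κ) := ⟨0, fun x hx => hx.1⟩
  obtain ⟨R, hR, hRs⟩ := (csInf_lt_iff hbdd (R0set_nonempty hκ)).mp hs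
  exact hR.2 s (lt_of_le_of_lt R0_nonneg hs) hRs.le

lemma Hf_eq_of_ge (hκ : memK κ) {r : ℝ} (hr : R0 κ ≤ r) : Hf κ r = Hf κ (R0 κ) := by
  have h1 := hfun_intervalIntegrable hκ le_rfl (R0_nonneg (κ := κ))
  have h2 := hfun_intervalIntegrable hκ (R0_nonneg (κ := κ)) hr
  have hadd := intervalIntegral.integral_add_adjacent_intervals h1 h2
  have hz : (∫ s in (R0 κ)..r, s * max (-κ s) 0) = 0 := by
    rw [intervalIntegral.integral_of_le hr]
    have heq : EqOn (fun s => s * max (-κ s) 0) (fun _ => (0:ℝ)) (Ioc (R0 κ) r) := by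
      intro s hs
      have h0 : 0 ≤ κ s := kappa_nonneg hκ hs.1
      simp [max_eq_right (neg_nonpos.mpr h0)]
    rw [MeasureTheory.setIntegral_congr_fun measurableSet_Ioc heq]
    simp
  unfold Hf; rw [hz] at hadd; linarith [hadd]

lemma phiF_ge (hκ : memK κ) (hσ : 0 < σ) {r : ℝ} (hr : 0 ≤ r) :
    phiF κ σ (R0 κ) ≤ phiF κ σ r := by
  rcases le_total r (R0 κ) with h | h
  · exact phiF_anti hκ hσ hr R0_nonneg h
  · rw [phiF_eq, phiF_eq, Hf_eq_of_ge hκ h]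

lemma phiF_intervalIntegrable (hκ : memK κ) (hσ : 0 < σ) {a b : ℝ} (ha : 0 ≤ a) (hab : a ≤ b) :
    IntervalIntegrable (phiF κ σ) volume a b := by
  refine ((phiF_anti hκ hσ).mono ?_).intervalIntegrable
  intro x hx
  rw [uIcc_of_le hab] at hx
  exact ha.trans hx.1

lemma PhiF_nonneg {r : ℝ} (hr : 0 ≤ r) : 0 ≤ PhiF κ σ r :=
  intervalIntegral.integral_nonneg hr fun u _ => (phiF_pos u).le

lemma PhiF_mono (hκ : memK κ) (hσ : 0 < σ) {a b : ℝ} (ha : 0 ≤ a) (hab : a ≤ b) :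
    PhiF κ σ a ≤ PhiF κ σ b := by
  have h1 := phiF_intervalIntegrable hκ hσ le_rfl ha
  have h2 := phiF_intervalIntegrable hκ hσ ha hab
  have hadd := intervalIntegral.integral_add_adjacent_intervals h1 h2
  have hpos : 0 ≤ ∫ s in a..b, phiF κ σ s :=
    intervalIntegral.integral_nonneg hab fun u _ => (phiF_pos u).le
  unfold PhiF; linarith

lemma PhiF_lb (hκ : memK κ) (hσ : 0 < σ) {r : ℝ} (hr : 0 ≤ r) :
    phiF κ σ (R0 κ) * r ≤ PhiF κ σ r := by
  have h := intervalIntegral.integral_mono_on (μ := volume) hr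
    (intervalIntegrable_const (c := phiF κ σ (R0 κ)))
    (phiF_intervalIntegrable hκ hσ le_rfl hr)
    (fun x hx => phiF_ge hκ hσ hx.1)
  rw [intervalIntegral.integral_const] at h
  unfold PhiF
  rw [smul_eq_mul] at h
  linarith [h]

def Qf (κ : ℝ → ℝ) (σ : ℝ) (s : ℝ) : ℝ := PhiF κ σ s / phiF κ σ s

lemma Qf_nonneg {s : ℝ} (hs : 0 ≤ s) : 0 ≤ Qf κ σ s :=
  div_nonneg (PhiF_nonneg hs) (phiF_pos s).le

lemma Qf_mono (hκ : memK κ) (hσ : 0 < σ) : MonotoneOn (Qf κ σ) (Ici 0) := by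
  intro a ha b hb hab
  exact div_le_div₀ (PhiF_nonneg hb) (PhiF_mono hκ hσ ha hab) (phiF_pos b)
    (phiF_anti hκ hσ ha hb hab)

lemma Qf_intervalIntegrable (hκ : memK κ) (hσ : 0 < σ) {a b : ℝ} (ha : 0 ≤ a) (hab : a ≤ b) :
    IntervalIntegrable (Qf κ σ) volume a b := by
  refine ((Qf_mono hκ hσ).mono ?_).intervalIntegrable
  intro x hx
  rw [uIcc_of_le hab] at hx
  exact ha.trans hx.1

lemma R1set_nonempty (hκ : memK κ) (hσ : 0 < σ) : (R1set κ σ).Nonempty := by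
  obtain ⟨ε, hε, hev⟩ := hκ.2.2
  rw [eventually_atTop] at hev
  obtain ⟨M, hM⟩ := hev
  set R := max M (R0 κ + 1 + 4 * σ ^ 2 / ε) with hRdef
  have hquot : 0 ≤ 4 * σ ^ 2 / ε := by positivity
  have hR0 : (0:ℝ) ≤ R0 κ := R0_nonneg
  have hRge : R0 κ + 1 + 4 * σ ^ 2 / ε ≤ R := le_max_right _ _
  refine ⟨R, by linarith, fun r hr hRr => ?_⟩
  have hκr : ε ≤ κ r := hM r ((le_max_left M _).trans hRr)
  have h1 : (1:ℝ) ≤ R := by linarith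
  have h2 : 4 * σ ^ 2 / ε ≤ R - R0 κ := by linarith
  have key : 4 * σ ^ 2 ≤ (R - R0 κ) * ε := (div_le_iff₀ hε).mp h2
  have hsub : 0 ≤ R - R0 κ := by linarith
  have s1 : (R - R0 κ) * ε ≤ (R - R0 κ) * κ r := mul_le_mul_of_nonneg_left hκr hsub
  have s2 : (R - R0 κ) * κ r ≤ R * ((R - R0 κ) * κ r) :=
    le_mul_of_one_le_left (mul_nonneg hsub (hε.le.trans hκr)) h1
  nlinarith [s1, s2, key]

lemma R0_le_R1 (hκ : memK κ) (hσ : 0 < σ) : R0 κ ≤ R1 κ σ :=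
  le_csInf (R1set_nonempty hκ hσ) fun R hR => hR.1

lemma R1_pos (hκ : memK κ) (hσ : 0 < σ) : 0 < R1 κ σ := by
  set M := max (κ 1) 1 with hMdef
  have hM : (0:ℝ) < M := lt_of_lt_of_le one_pos (le_max_right _ _)
  have hsM : 0 < Real.sqrt M := Real.sqrt_pos.mpr hM
  set c := min 1 (2 * σ / Real.sqrt M) with hcdef
  have hc : 0 < c := lt_min one_pos (by positivity)
  refine lt_of_lt_of_le hc (le_csInf (R1set_nonempty hκ hσ) fun R hR => ?_)
  rcases le_or_gt 1 R with h | h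
  · exact (min_le_left _ _).trans h
  · have hcond := hR.2 1 one_pos h.le
    have hR0 : (0:ℝ) ≤ R0 κ := R0_nonneg
    have hRnn : 0 ≤ R := hR0.trans hR.1
    have hsub : 0 ≤ R - R0 κ := by linarith [hR.1]
    have h4 : (0:ℝ) < 4 * σ ^ 2 := by positivity
    rcases le_or_gt (κ 1) 0 with hκ1 | hκ1
    · exfalso
      have : R * (R - R0 κ) * κ 1 ≤ 0 :=
        mul_nonpos_of_nonneg_of_nonpos (mul_nonneg hRnn hsub) hκ1
      linarith
    · have hκM : κ 1 ≤ M := le_max_left _ _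
      have hb : R * (R - R0 κ) * κ 1 ≤ R * R * M := by
        have hA : R * (R - R0 κ) ≤ R * R := mul_le_mul_of_nonneg_left (by linarith) hRnn
        have := mul_le_mul hA hκM hκ1.le (mul_nonneg hRnn hRnn)
        linarith
      have hsq : 4 * σ ^ 2 ≤ R * R * M := le_trans hcond hb
      have hfin : 2 * σ / Real.sqrt M ≤ R := by
        rw [div_le_iff₀ hsM]
        nlinarith [Real.sq_sqrt hM.le, mul_nonneg hRnn hsM.le, hσ]
      exact (min_le_right _ _).trans hfin

lemma Zconst_lb (hκ : memK κ) (hσ : 0 < σ) :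
    phiF κ σ (R0 κ) * ((R1 κ σ) ^ 2 / 2) ≤ Zconst κ σ := by
  have hR1 : (0:ℝ) ≤ R1 κ σ := (R1_pos hκ hσ).le
  have hmono : ∀ x ∈ Icc (0:ℝ) (R1 κ σ), phiF κ σ (R0 κ) * x ≤ Qf κ σ x := by
    intro x hx
    have h1 : phiF κ σ (R0 κ) * x ≤ PhiF κ σ x := PhiF_lb hκ hσ hx.1
    have h2 : PhiF κ σ x ≤ PhiF κ σ x / phiF κ σ x := by
      rw [le_div_iff₀ (phiF_pos x)]
      exact mul_le_of_le_one_right (PhiF_nonneg hx.1) (phiF_le_one hσ hx.1)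
    exact h1.trans h2
  have h := intervalIntegral.integral_mono_on (μ := volume) hR1
    (((continuous_const.mul continuous_id').intervalIntegrable _ _))
    (Qf_intervalIntegrable hκ hσ le_rfl hR1) hmono
  have hL : (∫ x in (0:ℝ)..(R1 κ σ), phiF κ σ (R0 κ) * x)
      = phiF κ σ (R0 κ) * ((R1 κ σ) ^ 2 / 2) := by
    rw [intervalIntegral.integral_const_mul, integral_id]
    ring
  rw [← hL]
  exact h

lemma Zconst_pos (hκ : memK κ) (hσ : 0 < σ) : 0 < Zconst κ σ := by
  refine lt_of_lt_of_le ?_ (Zconst_lb hκ hσ)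
  have := R1_pos hκ hσ
  have := phiF_pos (κ := κ) (σ := σ) (R0 κ)
  positivity

def If (κ : ℝ → ℝ) (σ : ℝ) (t : ℝ) : ℝ := ∫ s in (0:ℝ)..t, Qf κ σ s

lemma If_nonneg {t : ℝ} (ht : 0 ≤ t) : 0 ≤ If κ σ t :=
  intervalIntegral.integral_nonneg ht fun u hu => Qf_nonneg hu.1

lemma If_mono (hκ : memK κ) (hσ : 0 < σ) {a b : ℝ} (ha : 0 ≤ a) (hab : a ≤ b) :
    If κ σ a ≤ If κ σ b := by
  have h1 := Qf_intervalIntegrable hκ hσ le_rfl ha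
  have h2 := Qf_intervalIntegrable hκ hσ ha hab
  have hadd := intervalIntegral.integral_add_adjacent_intervals h1 h2
  have hpos : 0 ≤ ∫ s in a..b, Qf κ σ s :=
    intervalIntegral.integral_nonneg hab fun u hu => Qf_nonneg (ha.trans hu.1)
  unfold If; linarith

lemma If_le_Z (hκ : memK κ) (hσ : 0 < σ) {t : ℝ} (ht : 0 ≤ t) (htR : t ≤ R1 κ σ) :
    If κ σ t ≤ Zconst κ σ := by
  have h := If_mono hκ hσ ht htR
  have : If κ σ (R1 κ σ) = Zconst κ σ := rfl
  linarith

lemma gF_eq (r : ℝ) : gF κ σ r = 1 - If κ σ (min r (R1 κ σ)) / (2 * Zconst κ σ) := rfl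

lemma gF_bounds (hκ : memK κ) (hσ : 0 < σ) {r : ℝ} (hr : 0 ≤ r) :
    1 / 2 ≤ gF κ σ r ∧ gF κ σ r ≤ 1 := by
  have hZ := Zconst_pos hκ hσ
  set t := min r (R1 κ σ) with htdef
  have ht0 : 0 ≤ t := le_min hr (R1_pos hκ hσ).le
  have ht1 : t ≤ R1 κ σ := min_le_right _ _
  have hI0 : 0 ≤ If κ σ t := If_nonneg ht0
  have hIZ : If κ σ t ≤ Zconst κ σ := If_le_Z hκ hσ ht0 ht1
  have h2Z : (0:ℝ) < 2 * Zconst κ σ := by linarith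
  have hd1 : If κ σ t / (2 * Zconst κ σ) ≤ 1 / 2 := by
    rw [div_le_iff₀ h2Z]; linarith
  have hd2 : 0 ≤ If κ σ t / (2 * Zconst κ σ) := div_nonneg hI0 h2Z.le
  rw [gF_eq]
  constructor <;> linarith

lemma fprime_bounds (hκ : memK κ) (hσ : 0 < σ) {r : ℝ} (hr : 0 ≤ r) :
    CConst κ σ ≤ phiF κ σ r * gF κ σ r ∧ phiF κ σ r * gF κ σ r ≤ 1 := by
  obtain ⟨hg1, hg2⟩ := gF_bounds hκ hσ hr
  constructor
  · have h := mul_le_mul (phiF_ge hκ hσ hr) hg1 (by norm_num) (phiF_pos r).le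
    unfold CConst; linarith
  · exact mul_le_one₀ (phiF_le_one hσ hr) (by linarith) hg2

lemma gF_anti (hκ : memK κ) (hσ : 0 < σ) : AntitoneOn (gF κ σ) (Ici 0) := by
  intro a ha b hb hab
  rw [gF_eq, gF_eq]
  have hZ := Zconst_pos hκ hσ
  have h2Z : (0:ℝ) < 2 * Zconst κ σ := by linarith
  have ha0 : 0 ≤ min a (R1 κ σ) := le_min ha (R1_pos hκ hσ).le
  have hmin : min a (R1 κ σ) ≤ min b (R1 κ σ) := min_le_min hab le_rfl
  have hI := If_mono hκ hσ ha0 hmin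
  have hd : If κ σ (min a (R1 κ σ)) / (2 * Zconst κ σ)
      ≤ If κ σ (min b (R1 κ σ)) / (2 * Zconst κ σ) := (div_le_div_iff_of_pos_right h2Z).mpr hI
  linarith

lemma phig_intervalIntegrable (hκ : memK κ) (hσ : 0 < σ) {r : ℝ} (hr : 0 ≤ r) :
    IntervalIntegrable (fun s => phiF κ σ s * gF κ σ s) volume 0 r := by
  have hanti : AntitoneOn (fun s => phiF κ σ s * gF κ σ s) (Ici 0) := by
    intro a ha b hb hab
    have hga := gF_bounds hκ hσ ha
    have hgb := gF_bounds hκ hσ hb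
    exact mul_le_mul (phiF_anti hκ hσ ha hb hab) (gF_anti hκ hσ ha hb hab)
      (by linarith [hgb.1]) (phiF_pos a).le
  refine (hanti.mono ?_).intervalIntegrable
  intro x hx
  rw [uIcc_of_le hr] at hx
  exact hx.1

end Stmt2Aux

/-- `f_{κ,σ̌}` is equivalent to the identity on `[0,∞)`:
`C_{κ,σ̌}·r ≤ f(r) ≤ r` and `C_{κ,σ̌} ≤ f'(r) = φ(r)g(r) ≤ 1`. -/
theorem stmt2 (κ : ℝ → ℝ) (σ : ℝ) (hκ : memK κ) (hσ : 0 < σ) :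
    ∀ r, 0 ≤ r →
      CConst κ σ * r ≤ fF κ σ r ∧ fF κ σ r ≤ r ∧
      CConst κ σ ≤ phiF κ σ r * gF κ σ r ∧ phiF κ σ r * gF κ σ r ≤ 1 := by
  intro r hr
  obtain ⟨hfp1, hfp2⟩ := Stmt2Aux.fprime_bounds hκ hσ hr
  have hII := Stmt2Aux.phig_intervalIntegrable hκ hσ hr
  refine ⟨?_, ?_, hfp1, hfp2⟩
  · have h := intervalIntegral.integral_mono_on (μ := volume) hr
      (intervalIntegrable_const (c := CConst κ σ)) hII
      (fun x hx => (Stmt2Aux.fprime_bounds hκ hσ hx.1).1)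
    rw [intervalIntegral.integral_const, smul_eq_mul] at h
    have he : (r - 0) * CConst κ σ = CConst κ σ * r := by ring
    unfold fF
    linarith
  · have h := intervalIntegral.integral_mono_on (μ := volume) hr hII
      (intervalIntegrable_const (c := (1:ℝ)))
      (fun x hx => (Stmt2Aux.fprime_bounds hκ hσ hx.1).2)
    rw [intervalIntegral.integral_const, smul_eq_mul] at h
    unfold fF
    linarith
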